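/- Let r > 0 and let C, O, A, B be points in the Euclidean plane such that dist C O = 2r, dist C A = 2r, dist A O = 2·√3·r, dist C B = 4r, the points A, O, B are collinear, and O lies strictly between A and B (i.e., O ∈ segment ℝ A B, O ≠ A, O ≠ B). Then dist A B / dist A O = φ and dist A O / dist O B = φ, where φ = (1+√5)/2 is the golden ratio. (That is, the vertex O of the hexagonal cluster is the golden-section point of the segment A B obtained from a tangent of the inner circle of radius r crossing the middle circle of radius 2r at A and the outer circle of radius 4r at B.) -/

import Mathlib

theorem phi_center_of_hexagonal_cluster
    (r : ℝ) (hr : 0 < r)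
    (C O A B : EuclideanSpace ℝ (Fin 2))
    (hCO : dist C O = 2 * r)
    (hCA : dist C A = 2 * r)
    (hAO : dist A O = 2 * Real.sqrt 3 * r)
    (hCB : dist C B = 4 * r)
    (hcol : Collinear ℝ ({A, O, B} : Set (EuclideanSpace ℝ (Fin 2))))
    (hseg : O ∈ segment ℝ A B) (hOA : O ≠ A) (hOB : O ≠ B) :
    dist A B / dist A O = (1 + Real.sqrt 5) / 2 ∧
    dist A O / dist O B = (1 + Real.sqrt 5) / 2 := by
  have hs3 : Real.sqrt 3 ^ 2 = 3 := Real.sq_sqrt (by norm_num)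
  have hs5 : Real.sqrt 5 ^ 2 = 5 := Real.sq_sqrt (by norm_num)
  have hs3p : 0 < Real.sqrt 3 := Real.sqrt_pos.mpr (by norm_num)
  have hs5p : 2 < Real.sqrt 5 := by nlinarith [Real.sqrt_nonneg 5]
  rw [segment_eq_image_lineMap] at hseg
  obtain ⟨t, ht, hO⟩ := hseg
  simp only [Set.mem_Icc] at ht
  set d := dist A B with hdAB
  clear_value d
  have h1 : dist A O = t * d := by
    rw [dist_comm, ← hO, dist_lineMap_left, Real.norm_eq_abs, abs_of_nonneg ht.1, ← hdAB]
  have htd : t * d = 2 * Real.sqrt 3 * r := by rw [← h1, hAO]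
  have hdpos : 0 < d := by
    have hdnn : 0 ≤ d := hdAB ▸ dist_nonneg
    rcases lt_or_eq_of_le hdnn with h | h
    · exact h
    · exfalso
      have hd0 : d = 0 := h.symm
      rw [hd0, mul_zero] at htd
      nlinarith [mul_pos hs3p hr]
  have htpos : 0 < t := by nlinarith [ht.1]
  have ht1 : t < 1 := by
    rcases lt_or_eq_of_le ht.2 with h | h
    · exact h
    · exfalso; apply hOB; rw [← hO, h]; simp
  have h2 : dist O B = (1 - t) * d := by
    rw [← hO, dist_lineMap_right, Real.norm_eq_abs, abs_of_nonneg (by linarith), ← hdAB]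
  -- vectors
  set v : EuclideanSpace ℝ (Fin 2) := A - C with hv
  set w : EuclideanSpace ℝ (Fin 2) := B - A with hw
  set p : ℝ := inner ℝ v w with hp
  clear_value p
  have hnv : ‖v‖ = 2 * r := by rw [hv, ← dist_eq_norm, dist_comm]; exact hCA
  have hnw : ‖w‖ = d := by rw [hw, ← dist_eq_norm, dist_comm, ← hdAB]
  have hip1 : (4 * r) ^ 2 = d ^ 2 + 2 * p + (2 * r) ^ 2 := by
    have hBC : B - C = w + v := by rw [hw, hv]; abel
    have h0 : dist C B ^ 2 = ‖w + v‖ ^ 2 := by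
      rw [dist_comm, dist_eq_norm, hBC]
    have hexp : ‖w + v‖ ^ 2 = d ^ 2 + 2 * p + (2 * r) ^ 2 := by
      rw [norm_add_sq_real, hnw, hnv, real_inner_comm, ← hp]
    rw [hCB] at h0
    linarith [h0, hexp]
  have hOC : O - C = v + t • w := by
    rw [← hO, AffineMap.lineMap_apply_module, hv, hw]
    module
  have hip2 : (2 * r) ^ 2 = (2 * r) ^ 2 + 2 * (t * p) + t ^ 2 * d ^ 2 := by
    have h0 : dist C O ^ 2 = ‖v + t • w‖ ^ 2 := by
      rw [dist_comm, dist_eq_norm, hOC]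
    have hexp : ‖v + t • w‖ ^ 2 = (2 * r) ^ 2 + 2 * (t * p) + t ^ 2 * d ^ 2 := by
      rw [norm_add_sq_real, hnv, real_inner_smul_right, ← hp, norm_smul,
        Real.norm_eq_abs, abs_of_nonneg ht.1, hnw]
      ring
    rw [hCO] at h0
    linarith [h0, hexp]
  -- derive the quadratic d^2 = 2√3 r d + 12 r^2
  have hpval : 2 * p + t * d ^ 2 = 0 := by
    have : t * (2 * p + t * d ^ 2) = 0 := by linear_combination -hip2
    rcases mul_eq_zero.mp this with h | h
    · exact absurd h (ne_of_gt htpos)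
    · exact h
  have hquad : d ^ 2 = 2 * Real.sqrt 3 * r * d + 12 * r ^ 2 := by
    linear_combination -hip1 - hpval + d * htd
  have key : (d - Real.sqrt 3 * (1 + Real.sqrt 5) * r) *
      (d + Real.sqrt 3 * (Real.sqrt 5 - 1) * r) = 0 := by
    linear_combination hquad - (Real.sqrt 5 ^ 2 - 1) * r ^ 2 * hs3 - 3 * r ^ 2 * hs5
  have hd_eq : d = Real.sqrt 3 * (1 + Real.sqrt 5) * r := by
    rcases mul_eq_zero.mp key with h | h
    · linarith
    · exfalso
      have h51 : 0 < Real.sqrt 5 - 1 := by linarith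
      nlinarith [mul_pos (mul_pos hs3p h51) hr]
  constructor
  · rw [hAO, hd_eq]
    rw [div_eq_div_iff (by positivity) (by norm_num)]
    ring
  · have hOBval : dist O B = Real.sqrt 3 * (Real.sqrt 5 - 1) * r := by
      rw [h2]; linear_combination hd_eq - htd
    rw [hAO, hOBval]
    have h51 : 0 < Real.sqrt 5 - 1 := by linarith
    rw [div_eq_div_iff (mul_pos (mul_pos hs3p h51) hr).ne' (by norm_num)]
    linear_combination (-(Real.sqrt 3 * r)) * hs5
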